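/- Let X be δ-regular with constant C_R on scales α₀ to α₁ where α₁ ≥ 2α₀, and fix T ≥ 1. Then the neighborhood X(Tα₀) = X + [−Tα₀, Tα₀] is δ-regular with constant 4TC_R on scales 2α₀ to α₁. -/

import Mathlib

open MeasureTheory Set

/-- `X` is δ-regular with constant `CR` on scales `α₀` to `α₁`. -/
def IsDeltaRegular (X : Set ℝ) (δ CR α₀ α₁ : ℝ) : Prop :=
  ∃ μ : Measure ℝ,
    μ Xᶜ = 0 ∧
    (∀ a b : ℝ, α₀ ≤ b - a → b - a ≤ α₁ →
        μ (Set.Icc a b) ≤ ENNReal.ofReal (CR * (b - a) ^ δ)) ∧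
    (∀ a b : ℝ, α₀ ≤ b - a → b - a ≤ α₁ → (a + b) / 2 ∈ X →
        ENNReal.ofReal (CR⁻¹ * (b - a) ^ δ) ≤ μ (Set.Icc a b))

theorem stmt_2 (X : Set ℝ) (δ CR α₀ α₁ T : ℝ)
    (hδ0 : 0 ≤ δ) (hδ1 : δ ≤ 1) (hCR : 1 ≤ CR) (hα0 : 0 ≤ α₀) (hα : 2 * α₀ ≤ α₁)
    (hT : 1 ≤ T) (h : IsDeltaRegular X δ CR α₀ α₁) :
    IsDeltaRegular {z : ℝ | ∃ x ∈ X, |z - x| ≤ T * α₀} δ (4 * T * CR) (2 * α₀) α₁ := by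
  obtain ⟨μ, hμX, hup, hlow⟩ := h
  have hT0 : (0:ℝ) < T := lt_of_lt_of_le one_pos hT
  have hCR0 : (0:ℝ) < CR := lt_of_lt_of_le one_pos hCR
  set N : ℕ := ⌈2 * T⌉₊ with hNdef
  have hNR : (2:ℝ) * T ≤ (N:ℝ) := Nat.le_ceil _
  have hN1 : (N:ℝ) < 2 * T + 1 := Nat.ceil_lt_add_one (by positivity)
  have hNpos : (0:ℝ) < (N:ℝ) := lt_of_lt_of_le (by linarith) hNR
  set s : ℝ := T * α₀ / N with hsdef
  have hs0 : 0 ≤ s := by positivity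
  have hNs : (N:ℝ) * s = T * α₀ := by
    rw [hsdef]; field_simp
  have h2s : 2 * s ≤ α₀ := by
    have e : 2 * (T * α₀ / (N:ℝ)) = 2 * (T * α₀) / (N:ℝ) := by ring
    rw [hsdef, e, div_le_iff₀ hNpos]
    nlinarith
  set F : Finset ℤ := Finset.Icc (-(N:ℤ)) (N:ℤ) with hF
  set c := ENNReal.ofReal ((2*T)⁻¹) with hc
  have hmap : ∀ (v : ℝ) (A : Set ℝ), (μ.map (fun x => x + v)) A = μ ((fun x => x + v) ⁻¹' A) :=
    fun v A => (MeasurableEquiv.addRight v).measurableEmbedding.map_apply μ A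
  refine ⟨∑ k ∈ F, c • μ.map (fun x => x + (k:ℝ) * s), ?_, ?_, ?_⟩
  · -- support
    rw [Measure.finset_sum_apply]
    refine Finset.sum_eq_zero fun k hk => ?_
    rw [Measure.smul_apply]
    have hsub : (fun x => x + (k:ℝ)*s) ⁻¹' {z : ℝ | ∃ x ∈ X, |z - x| ≤ T * α₀}ᶜ ⊆ Xᶜ := by
      intro x hx hxX
      apply hx
      refine ⟨x, hxX, ?_⟩
      have hk' := Finset.mem_Icc.mp hk
      have hkabs : |(k:ℝ)| ≤ (N:ℝ) := by
        rw [abs_le]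
        constructor <;> [exact_mod_cast hk'.1; exact_mod_cast hk'.2]
      have : |x + (k:ℝ)*s - x| = |(k:ℝ)| * s := by
        rw [add_sub_cancel_left, abs_mul, abs_of_nonneg hs0]
      rw [this, ← hNs]
      exact mul_le_mul_of_nonneg_right hkabs hs0
    have h0 : (μ.map (fun x => x + (k:ℝ)*s)) {z : ℝ | ∃ x ∈ X, |z - x| ≤ T * α₀}ᶜ = 0 := by
      rw [hmap]
      exact measure_mono_null hsub hμX
    rw [h0, smul_zero]
  · -- upper bound
    intro a b hab1 hab2
    have hba0 : 0 ≤ b - a := le_trans (by linarith) hab1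
    have hP0 : 0 ≤ CR * (b - a) ^ δ := by positivity
    rw [Measure.finset_sum_apply]
    calc ∑ k ∈ F, (c • μ.map (fun x => x + (k:ℝ) * s)) (Icc a b)
        ≤ ∑ _k ∈ F, c * ENNReal.ofReal (CR * (b - a) ^ δ) := by
          refine Finset.sum_le_sum fun k _ => ?_
          rw [Measure.smul_apply, smul_eq_mul, hmap, preimage_add_const_Icc]
          refine mul_le_mul_right ?_ c
          have h1 : α₀ ≤ (b - (k:ℝ)*s) - (a - (k:ℝ)*s) := by
            have : (b - (k:ℝ)*s) - (a - (k:ℝ)*s) = b - a := by ring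
            rw [this]; linarith
          have h2 : (b - (k:ℝ)*s) - (a - (k:ℝ)*s) ≤ α₁ := by
            have : (b - (k:ℝ)*s) - (a - (k:ℝ)*s) = b - a := by ring
            rw [this]; linarith
          have := hup (a - (k:ℝ)*s) (b - (k:ℝ)*s) h1 h2
          have e : (b - (k:ℝ)*s) - (a - (k:ℝ)*s) = b - a := by ring
          rwa [e] at this
      _ = (F.card : ENNReal) * (c * ENNReal.ofReal (CR * (b - a) ^ δ)) := by
          rw [Finset.sum_const, nsmul_eq_mul]
      _ ≤ ENNReal.ofReal (4 * T * CR * (b - a) ^ δ) := by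
          have hcard : F.card = 2 * N + 1 := by
            rw [hF, Int.card_Icc]
            omega
          rw [hcard, hc, ← ENNReal.ofReal_mul (by positivity),
            ← ENNReal.ofReal_natCast (2*N+1), ← ENNReal.ofReal_mul (by positivity)]
          apply ENNReal.ofReal_le_ofReal
          push_cast
          have hkey : (2 * (N:ℝ) + 1) ≤ 4 * T * (2 * T) := by nlinarith
          calc (2 * (N:ℝ) + 1) * ((2*T)⁻¹ * (CR * (b-a)^δ))
              = ((2 * (N:ℝ) + 1) / (2*T)) * (CR * (b-a)^δ) := by ring
            _ ≤ (4 * T) * (CR * (b-a)^δ) := by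
                refine mul_le_mul_of_nonneg_right ?_ hP0
                rw [div_le_iff₀ (by linarith)]
                linarith
            _ = 4 * T * CR * (b-a)^δ := by ring
  · -- lower bound
    intro a b hab1 hab2 hm
    obtain ⟨x₀, hx₀, hd⟩ := hm
    set d : ℝ := (a + b) / 2 - x₀ with hddef
    obtain ⟨k, hkN, hks⟩ : ∃ k : ℤ, ((-(N:ℤ)) ≤ k ∧ k ≤ (N:ℤ)) ∧ |d - (k:ℝ)*s| ≤ s/2 := by
      rcases eq_or_lt_of_le hs0 with hs' | hspos
      · refine ⟨0, ⟨by simp, by simp⟩, ?_⟩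
        have hTα : T * α₀ = 0 := by rw [← hNs, ← hs']; ring
        have : |d| ≤ 0 := by rw [← hTα]; exact hd
        simpa [← hs'] using this
      · refine ⟨round (d/s), ?_, ?_⟩
        · have hds : |d/s| ≤ (N:ℝ) := by
            rw [abs_div, abs_of_pos hspos, div_le_iff₀ hspos, hNs]
            exact hd
          have hr2 : |(round (d/s) : ℝ)| ≤ (N:ℝ) + 1/2 := by
            have h1 : |(round (d/s) : ℝ) - d/s| ≤ 1/2 := by
              rw [abs_sub_comm]; exact abs_sub_round _
            calc |(round (d/s) : ℝ)| ≤ |(round (d/s) : ℝ) - d/s| + |d/s| := by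
                  simpa using abs_add_le ((round (d/s) : ℝ) - d/s) (d/s)
              _ ≤ (N:ℝ) + 1/2 := by linarith
          have habs : |round (d/s)| ≤ (N:ℤ) := by
            have : ((|round (d/s)| : ℤ) : ℝ) < (N:ℝ) + 1 := by
              rw [Int.cast_abs]; linarith
            have := (by exact_mod_cast this : |round (d/s)| < (N:ℤ) + 1)
            omega
          rw [abs_le] at habs
          exact habs
        · have : d - (round (d/s) : ℝ) * s = (d/s - round (d/s)) * s := by
            field_simp
          rw [this, abs_mul, abs_of_pos hspos]
          calc |d/s - (round (d/s):ℝ)| * s ≤ (1/2) * s :=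
                mul_le_mul_of_nonneg_right (abs_sub_round _) hs0
            _ = s/2 := by ring
    have hkF : k ∈ F := Finset.mem_Icc.mpr hkN
    have habs := abs_le.mp hks
    set ρ : ℝ := (b - a - s) / 2 with hρ
    -- the shifted interval contains Icc (x₀ - ρ) (x₀ + ρ)
    have hsub : Icc (x₀ - ρ) (x₀ + ρ) ⊆ Icc (a - (k:ℝ)*s) (b - (k:ℝ)*s) := by
      apply Icc_subset_Icc
      · rw [hρ, hddef] at *
        have := habs.2
        linarith [habs.2]
      · linarith [habs.1]
    have hlen1 : α₀ ≤ (x₀ + ρ) - (x₀ - ρ) := by rw [hρ]; linarith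
    have hlen2 : (x₀ + ρ) - (x₀ - ρ) ≤ α₁ := by rw [hρ]; linarith
    have hcen : ((x₀ - ρ) + (x₀ + ρ)) / 2 ∈ X := by
      have : ((x₀ - ρ) + (x₀ + ρ)) / 2 = x₀ := by ring
      rw [this]; exact hx₀
    have hJ := hlow (x₀ - ρ) (x₀ + ρ) hlen1 hlen2 hcen
    have elen : (x₀ + ρ) - (x₀ - ρ) = b - a - s := by rw [hρ]; ring
    rw [elen] at hJ
    -- real inequality
    have hba0 : 0 ≤ b - a := le_trans (by linarith) hab1
    have hbas0 : 0 ≤ b - a - s := by linarith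
    have hpow : (1/2) * (b - a) ^ δ ≤ (b - a - s) ^ δ := by
      have h34 : (3/4) * (b - a) ≤ b - a - s := by linarith
      calc (1/2 : ℝ) * (b - a) ^ δ
          ≤ (3/4 : ℝ) ^ δ * (b - a) ^ δ := by
            refine mul_le_mul_of_nonneg_right ?_ (Real.rpow_nonneg hba0 δ)
            have := Real.rpow_le_rpow_of_exponent_ge (by norm_num : (0:ℝ) < 3/4)
              (by norm_num : (3/4:ℝ) ≤ 1) hδ1
            rw [Real.rpow_one] at this
            linarith
        _ = ((3/4) * (b - a)) ^ δ := (Real.mul_rpow (by norm_num) hba0).symm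
        _ ≤ (b - a - s) ^ δ := Real.rpow_le_rpow (by positivity) h34 hδ0
    have hreal : (4*T*CR)⁻¹ * (b - a) ^ δ ≤ (2*T)⁻¹ * (CR⁻¹ * (b - a - s) ^ δ) := by
      have e : (4*T*CR)⁻¹ * (b - a) ^ δ
          = (2*T)⁻¹ * (CR⁻¹ * ((1/2) * (b - a) ^ δ)) := by
        rw [show 4*T*CR = (2*T) * CR * 2 by ring, mul_inv, mul_inv]
        ring
      rw [e]
      exact mul_le_mul_of_nonneg_left
        (mul_le_mul_of_nonneg_left hpow (by positivity)) (by positivity)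
    calc ENNReal.ofReal ((4*T*CR)⁻¹ * (b - a) ^ δ)
        ≤ ENNReal.ofReal ((2*T)⁻¹ * (CR⁻¹ * (b - a - s) ^ δ)) :=
          ENNReal.ofReal_le_ofReal hreal
      _ = c * ENNReal.ofReal (CR⁻¹ * (b - a - s) ^ δ) := by
          rw [hc, ← ENNReal.ofReal_mul (by positivity)]
      _ ≤ c * μ (Icc (x₀ - ρ) (x₀ + ρ)) := mul_le_mul_right hJ c
      _ ≤ c * μ (Icc (a - (k:ℝ)*s) (b - (k:ℝ)*s)) :=
          mul_le_mul_right (measure_mono hsub) c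
      _ = (c • μ.map (fun x => x + (k:ℝ) * s)) (Icc a b) := by
          rw [Measure.smul_apply, smul_eq_mul, hmap, preimage_add_const_Icc]
      _ ≤ (∑ j ∈ F, c • μ.map (fun x => x + (j:ℝ) * s)) (Icc a b) := by
          rw [Measure.finset_sum_apply]
          exact Finset.single_le_sum
            (f := fun j : ℤ => (c • μ.map (fun x => x + (j:ℝ) * s)) (Icc a b))
            (fun j _ => zero_le) hkF
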